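/- Let G ⊆ GL(V) be the automorphism group of a countable-dimensional structured space (V, ω) that is both universal and homogeneous. Then G is linear-oligomorphic: for every d ≥ 0 there exists a finite-dimensional subspace E ⊆ V such that every d-dimensional subspace W of V satisfies gW ⊆ E for some g ∈ G. -/

import Mathlib

/-- the automorphism group `G` of a countable-dimensional structured space
`(V, ω)` that is universal (with `d`-universal finite-dimensional structured spaces
existing for each `d`) and homogeneous is linear-oligomorphic: for every `d` there is a
finite-dimensional subspace `E ⊆ V` such that every `d`-dimensional subspace `W` of `V`
satisfies `gW ⊆ E` for some `g ∈ G`. -/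
theorem stmt_8 (k V : Type) [Field k] [CharZero k] [AddCommGroup V] [Module k V]
    (r : ℕ) (a : Fin r → ℕ)
    (ω : ∀ i : Fin r, MultilinearMap k (fun _ : Fin (a i) => V) k)
    (hcount : Nonempty (Module.Basis ℕ k V))
    (huniv : ∀ (W : Type) [AddCommGroup W] [Module k W] [FiniteDimensional k W]
      (η : ∀ i : Fin r, MultilinearMap k (fun _ : Fin (a i) => W) k),
      ∃ f : W →ₗ[k] V, Function.Injective f ∧
        ∀ (i : Fin r) (x : Fin (a i) → W), ω i (fun j => f (x j)) = η i x)
    (hduniv : ∀ d : ℕ, ∃ (E₀ : Type) (_ : AddCommGroup E₀) (_ : Module k E₀)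
      (_ : FiniteDimensional k E₀)
      (η₀ : ∀ i : Fin r, MultilinearMap k (fun _ : Fin (a i) => E₀) k),
      ∀ (W : Type) [AddCommGroup W] [Module k W] [FiniteDimensional k W]
        (η : ∀ i : Fin r, MultilinearMap k (fun _ : Fin (a i) => W) k),
        Module.finrank k W = d →
        ∃ f : W →ₗ[k] E₀, Function.Injective f ∧
          ∀ (i : Fin r) (x : Fin (a i) → W), η₀ i (fun j => f (x j)) = η i x)
    (hhomog : ∀ (W W' : Submodule k V) [FiniteDimensional k W] [FiniteDimensional k W']
      (φ : W ≃ₗ[k] W'),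
      (∀ (i : Fin r) (x : Fin (a i) → W),
        ω i (fun j => ((φ (x j) : W') : V)) = ω i (fun j => ((x j : V)))) →
      ∃ g : V ≃ₗ[k] V,
        (∀ (i : Fin r) (x : Fin (a i) → V), ω i (fun j => g (x j)) = ω i x) ∧
        ∀ u : W, g (u : V) = ((φ u : W') : V)) :
    ∀ d : ℕ, ∃ E : Submodule k V, FiniteDimensional k E ∧
      ∀ (W : Submodule k V) [FiniteDimensional k W], Module.finrank k W = d →
        ∃ g : V ≃ₗ[k] V,
          (∀ (i : Fin r) (x : Fin (a i) → V), ω i (fun j => g (x j)) = ω i x) ∧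
          W.map (g : V →ₗ[k] V) ≤ E := by
  intro d
  obtain ⟨E₀, _, _, _, η₀, hE₀⟩ := hduniv d
  obtain ⟨ι, hιinj, hι⟩ := huniv E₀ η₀
  refine ⟨LinearMap.range ι, inferInstance, ?_⟩
  intro W _ hW
  set η : ∀ i : Fin r, MultilinearMap k (fun _ : Fin (a i) => W) k :=
    fun i => (ω i).compLinearMap (fun _ => W.subtype) with hη
  obtain ⟨f, hfinj, hf⟩ := hE₀ W η hW
  set h : W →ₗ[k] V := ι.comp f with hh
  have hhinj : Function.Injective h := by
    intro x y hxy
    exact hfinj (hιinj hxy)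
  let φ : W ≃ₗ[k] LinearMap.range h := LinearEquiv.ofInjective h hhinj
  have hφ : ∀ (i : Fin r) (x : Fin (a i) → W),
      ω i (fun j => ((φ (x j) : LinearMap.range h) : V)) = ω i (fun j => ((x j : V))) := by
    intro i x
    have key : ∀ j, ((φ (x j) : LinearMap.range h) : V) = ι (f (x j)) := fun j => rfl
    simp only [key]
    rw [hι i (fun j => f (x j)), hf i x]
    rfl
  obtain ⟨g, hg, hgW⟩ := hhomog W (LinearMap.range h) φ hφ
  refine ⟨g, hg, ?_⟩
  rintro v ⟨u, hu, rfl⟩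
  have h1 : g u = ((φ ⟨u, hu⟩ : LinearMap.range h) : V) := hgW ⟨u, hu⟩
  have h2 : ((φ ⟨u, hu⟩ : LinearMap.range h) : V) = ι (f ⟨u, hu⟩) := rfl
  simp only [LinearEquiv.coe_coe]
  rw [h1, h2]
  exact ⟨f ⟨u, hu⟩, rfl⟩
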